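/- Let {R₁,R₂} = {B₁,B₂}{R^{-1},0}{B₁,B₂}^H. For every k ≥ 0 the iterate {P₁(k),P₂(k)} of the Riccati iteration started at {P₁(0),P₂(0)} = {Q,0} is a positive definite (hence invertible) bimatrix, the bimatrix {P₁(k),P₂(k)}^{-1} + {R₁,R₂} is positive definite (hence invertible), and the iteration can be equivalently written as {P₁(k+1),P₂(k+1)} = {Q,0} + {A₁,A₂}^H ({P₁(k),P₂(k)}^{-1} + {R₁,R₂})^{-1} {A₁,A₂}. -/

import Mathlib

open Matrix Filter Topology
open scoped ENNReal ComplexOrder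

noncomputable section

/-- Entrywise complex conjugate of a matrix, `M^#`. -/
def mconj {k l : Type*} (A : Matrix k l ℂ) : Matrix k l ℂ := A.map (starRingEnd ℂ)

/-- A bimatrix `{A₁, A₂}` of `k × l` complex matrices. -/
structure Bimatrix (k l : ℕ) where
  fst : Matrix (Fin k) (Fin l) ℂ
  snd : Matrix (Fin k) (Fin l) ℂ

namespace Bimatrix

variable {k l p : ℕ}

/-- The action of a bimatrix on a vector: `{A₁,A₂}x = A₁x + A₂^# x^#`. -/
def apply (A : Bimatrix k l) (x : Fin l → ℂ) : Fin k → ℂ :=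
  A.fst *ᵥ x + mconj A.snd *ᵥ star x

/-- Bimatrix product `{A₁,A₂}{B₁,B₂} = {A₁B₁ + A₂^#B₂, A₁^#B₂ + A₂B₁}`. -/
def mul (A : Bimatrix k l) (B : Bimatrix l p) : Bimatrix k p :=
  ⟨A.fst * B.fst + mconj A.snd * B.snd, mconj A.fst * B.snd + A.snd * B.fst⟩

/-- Bimatrix conjugate transpose `{A₁,A₂}^H = {A₁^H, A₂^T}`. -/
def conjT (A : Bimatrix k l) : Bimatrix l k :=
  ⟨A.fst.conjTranspose, A.snd.transpose⟩

def add (A B : Bimatrix k l) : Bimatrix k l := ⟨A.fst + B.fst, A.snd + B.snd⟩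

def sub (A B : Bimatrix k l) : Bimatrix k l := ⟨A.fst - B.fst, A.snd - B.snd⟩

def neg (A : Bimatrix k l) : Bimatrix k l := ⟨-A.fst, -A.snd⟩

/-- The identity bimatrix `{I, 0}`. -/
def one (k : ℕ) : Bimatrix k k := ⟨1, 0⟩

/-- A bimatrix is Hermitian if `P₁^H = P₁` and `P₂^T = P₂`. -/
def IsHermitian (P : Bimatrix k k) : Prop :=
  P.fst.conjTranspose = P.fst ∧ P.snd.transpose = P.snd

/-- The real quadratic form `Re (x^H P₁ x + x^H P₂^# x^#)` of a bimatrix. -/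
def quadForm (P : Bimatrix k k) (x : Fin k → ℂ) : ℝ :=
  (star x ⬝ᵥ P.apply x).re

/-- Positive semidefinite bimatrix. -/
def PosSemidef (P : Bimatrix k k) : Prop :=
  P.IsHermitian ∧ ∀ x : Fin k → ℂ, 0 ≤ P.quadForm x

/-- Positive definite bimatrix. -/
def PosDef (P : Bimatrix k k) : Prop :=
  P.IsHermitian ∧ (∀ x : Fin k → ℂ, 0 ≤ P.quadForm x) ∧
    ∀ x : Fin k → ℂ, x ≠ 0 → 0 < P.quadForm x

/-- The Loewner-type order on bimatrices: `X ≤ Y` iff `Y - X ≥ 0`. -/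
def le (X Y : Bimatrix k k) : Prop := PosSemidef (Y.sub X)

/-- `T` is the (two-sided) inverse of the bimatrix `S`. -/
def IsInv (S T : Bimatrix k k) : Prop := S.mul T = one k ∧ T.mul S = one k

/-- The complex-matrix representation of a bimatrix. -/
def toMat (S : Bimatrix k k) : Matrix (Fin k ⊕ Fin k) (Fin k ⊕ Fin k) ℂ :=
  fromBlocks S.fst (mconj S.snd) S.snd (mconj S.fst)

/-- The inverse of a bimatrix, extracted from the inverse of its complex-matrix
representation.  When `S` is invertible as a bimatrix, `S.inv` is its genuine inverse. -/
def inv (S : Bimatrix k k) : Bimatrix k k :=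
  ⟨(toMat S)⁻¹.toBlocks₁₁, (toMat S)⁻¹.toBlocks₂₁⟩

end Bimatrix

variable {n m : ℕ}

/-- The complex-valued linear system `x(k+1) = {A₁,A₂}x(k) + {B₁,B₂}u(k)` is
stabilizable if some full state feedback `u(k) = K₁x(k) + K₂^#x^#(k)` drives every
closed-loop solution to zero. -/
def Stabilizable (A : Bimatrix n n) (B : Bimatrix n m) : Prop :=
  ∃ K : Bimatrix m n, ∀ x : ℕ → (Fin n → ℂ),
    (∀ k : ℕ, x (k + 1) = A.apply (x k) + B.apply (K.apply (x k))) →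
    Tendsto x atTop (𝓝 0)

/-- `{S₁,S₂} = {R,0} + {B₁,B₂}^H {P₁,P₂} {B₁,B₂}`. -/
def Smat (B : Bimatrix n m) (R : Matrix (Fin m) (Fin m) ℂ) (P : Bimatrix n n) :
    Bimatrix m m :=
  (Bimatrix.mk R 0).add (B.conjT.mul (P.mul B))

/-- The bimatrix Riccati equation
`-{Q,0} = {A}^H{P}{A} - {P} - {A}^H{P}{B}{S}⁻¹{B}^H{P}{A}`, where
`{S} = {R,0} + {B}^H{P}{B}` is required to be invertible. -/
def RiccatiEq (A : Bimatrix n n) (B : Bimatrix n m)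
    (Q : Matrix (Fin n) (Fin n) ℂ) (R : Matrix (Fin m) (Fin m) ℂ)
    (P : Bimatrix n n) : Prop :=
  ∃ T : Bimatrix m m, (Smat B R P).IsInv T ∧
    (Bimatrix.mk Q 0).neg =
      ((A.conjT.mul (P.mul A)).sub P).sub
        (A.conjT.mul (P.mul (B.mul (T.mul (B.conjT.mul (P.mul A))))))

/-- The Riccati iteration `{P(0)} = {Q,0}`,
`{P(k+1)} = {Q,0} + {A}^H{P(k)}{A} - {A}^H{P(k)}{B}{S(k)}⁻¹{B}^H{P(k)}{A}`, where
`{S(k)} = {R,0} + {B}^H{P(k)}{B}`. -/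
def riccatiIter (A : Bimatrix n n) (B : Bimatrix n m)
    (Q : Matrix (Fin n) (Fin n) ℂ) (R : Matrix (Fin m) (Fin m) ℂ) : ℕ → Bimatrix n n
  | 0 => ⟨Q, 0⟩
  | k + 1 =>
    let P := riccatiIter A B Q R k
    ((Bimatrix.mk Q 0).add (A.conjT.mul (P.mul A))).sub
      (A.conjT.mul (P.mul (B.mul ((Smat B R P).inv.mul (B.conjT.mul (P.mul A))))))

/-! ### Auxiliary lemmas -/

section Aux

lemma mconj_mconj {k l : Type*} (A : Matrix k l ℂ) : mconj (mconj A) = A := by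
  ext i j; simp [mconj]

lemma mconj_add {k l : Type*} (A B : Matrix k l ℂ) : mconj (A + B) = mconj A + mconj B := by
  ext i j; simp [mconj]

lemma mconj_mul {k l p : Type*} [Fintype l] (A : Matrix k l ℂ) (B : Matrix l p ℂ) :
    mconj (A * B) = mconj A * mconj B := Matrix.map_mul

lemma mconj_zero {k l : Type*} : mconj (0 : Matrix k l ℂ) = 0 := by ext i j; simp [mconj]

lemma mconj_one {k : Type*} [DecidableEq k] : mconj (1 : Matrix k k ℂ) = 1 := by
  ext i j; simp [mconj, Matrix.one_apply, apply_ite]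

namespace Bimatrix

variable {k l p : ℕ}

lemma bext {A B : Bimatrix k l} (h1 : A.fst = B.fst) (h2 : A.snd = B.snd) : A = B := by
  cases A; cases B; simp_all

/-- `toMat` for rectangular bimatrices. -/
def tm (A : Bimatrix k l) : Matrix (Fin k ⊕ Fin k) (Fin l ⊕ Fin l) ℂ :=
  fromBlocks A.fst (mconj A.snd) A.snd (mconj A.fst)

lemma toMat_eq_tm (S : Bimatrix k k) : S.toMat = tm S := rfl

lemma tm_inj {A B : Bimatrix k l} (h : tm A = tm B) : A = B := by
  refine bext ?_ ?_
  · have := congrArg Matrix.toBlocks₁₁ h; simpa [tm, Matrix.toBlocks_fromBlocks₁₁] using this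
  · have := congrArg Matrix.toBlocks₂₁ h; simpa [tm, Matrix.toBlocks_fromBlocks₂₁] using this

lemma tm_add (A B : Bimatrix k l) : tm (A.add B) = tm A + tm B := by
  simp [tm, Bimatrix.add, Matrix.fromBlocks_add, mconj_add]

lemma tm_sub (A B : Bimatrix k l) : tm (A.sub B) = tm A - tm B := by
  have h : A.sub B = Bimatrix.mk (A.fst - B.fst) (A.snd - B.snd) := rfl
  ext i j
  rcases i with i | i <;> rcases j with j | j <;>
    simp [tm, h, fromBlocks, mconj, map_sub]

lemma tm_one : tm (Bimatrix.one k) = 1 := by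
  simp [tm, Bimatrix.one, mconj_one, mconj_zero, ← Matrix.fromBlocks_one]

lemma tm_mul (A : Bimatrix k l) (B : Bimatrix l p) : tm (A.mul B) = tm A * tm B := by
  simp only [tm, Bimatrix.mul, Matrix.fromBlocks_multiply, mconj_add, mconj_mul, mconj_mconj]
  congr 1 <;> abel

lemma tm_conjT (A : Bimatrix k l) : tm A.conjT = (tm A)ᴴ := by
  ext i j
  rcases i with i | i <;> rcases j with j | j <;>
    simp [tm, Bimatrix.conjT, fromBlocks, mconj, Matrix.conjTranspose_apply]

end Bimatrix

end Aux

section Aux2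
namespace Bimatrix
variable {k l p : ℕ}

/-- The block matrix `J = [[0,1],[1,0]]`. -/
def Jm (k : ℕ) : Matrix (Fin k ⊕ Fin k) (Fin k ⊕ Fin k) ℂ := fromBlocks 0 1 1 0

lemma Jm_mul_Jm : Jm k * Jm k = 1 := by
  simp [Jm, Matrix.fromBlocks_multiply, ← Matrix.fromBlocks_one]

/-- The antilinear symmetry whose fixed points are images of `tm`. -/
def sig (M : Matrix (Fin k ⊕ Fin k) (Fin l ⊕ Fin l) ℂ) :
    Matrix (Fin k ⊕ Fin k) (Fin l ⊕ Fin l) ℂ :=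
  Jm k * M.map (starRingEnd ℂ) * Jm l

lemma J_conj_J {k l : ℕ} (a b c d : Matrix (Fin k) (Fin l) ℂ) :
    Jm k * fromBlocks a b c d * Jm l = fromBlocks d c b a := by
  rw [Jm, Jm, Matrix.fromBlocks_multiply, Matrix.fromBlocks_multiply]
  simp

lemma sig_mul (M : Matrix (Fin k ⊕ Fin k) (Fin l ⊕ Fin l) ℂ)
    (N : Matrix (Fin l ⊕ Fin l) (Fin p ⊕ Fin p) ℂ) :
    sig (M * N) = sig M * sig N := by
  simp only [sig, Matrix.map_mul, Matrix.mul_assoc]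
  rw [← Matrix.mul_assoc (Jm l) (Jm l), Jm_mul_Jm, Matrix.one_mul]

lemma sig_one : sig (1 : Matrix (Fin k ⊕ Fin k) (Fin k ⊕ Fin k) ℂ) = 1 := by
  have : (1 : Matrix (Fin k ⊕ Fin k) (Fin k ⊕ Fin k) ℂ).map (starRingEnd ℂ) = 1 := by
    ext i j; simp [Matrix.one_apply, apply_ite]
  rw [sig, this, Matrix.mul_one, Jm_mul_Jm]

lemma sig_tm (A : Bimatrix k l) : sig (tm A) = tm A := by
  have hmap : (tm A).map (starRingEnd ℂ)
      = fromBlocks (mconj A.fst) A.snd (mconj A.snd) A.fst := by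
    ext i j
    rcases i with i | i <;> rcases j with j | j <;> simp [tm, fromBlocks, mconj]
  rw [sig, hmap, J_conj_J]
  rfl

lemma tm_of_sig_fixed {M : Matrix (Fin k ⊕ Fin k) (Fin k ⊕ Fin k) ℂ} (h : sig M = M) :
    tm ⟨M.toBlocks₁₁, M.toBlocks₂₁⟩ = M := by
  have hM : sig M = fromBlocks (mconj M.toBlocks₂₂) (mconj M.toBlocks₂₁)
      (mconj M.toBlocks₁₂) (mconj M.toBlocks₁₁) := by
    conv_lhs => rw [← Matrix.fromBlocks_toBlocks M]
    have hmap : (fromBlocks M.toBlocks₁₁ M.toBlocks₁₂ M.toBlocks₂₁ M.toBlocks₂₂).map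
        (starRingEnd ℂ) = fromBlocks (mconj M.toBlocks₁₁) (mconj M.toBlocks₁₂)
        (mconj M.toBlocks₂₁) (mconj M.toBlocks₂₂) := by
      ext i j; rcases i with i | i <;> rcases j with j | j <;> simp [fromBlocks, mconj]
    rw [sig, hmap, J_conj_J]
  rw [hM] at h
  have h11 := congrArg Matrix.toBlocks₁₁ h
  have h21 := congrArg Matrix.toBlocks₂₁ h
  simp only [Matrix.toBlocks_fromBlocks₁₁, Matrix.toBlocks_fromBlocks₂₁] at h11 h21
  -- h11 : mconj M.toBlocks₂₂ = M.toBlocks₁₁ ; h21 : mconj M.toBlocks₁₂ = M.toBlocks₂₁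
  have e22 : mconj M.toBlocks₁₁ = M.toBlocks₂₂ := by rw [← h11, mconj_mconj]
  have e12 : mconj M.toBlocks₂₁ = M.toBlocks₁₂ := by rw [← h21, mconj_mconj]
  conv_rhs => rw [← Matrix.fromBlocks_toBlocks M]
  rw [tm, e22, e12]

lemma tm_inv {S : Bimatrix k k} (h : IsUnit (tm S)) : tm S.inv = (tm S)⁻¹ := by
  have hd : IsUnit (tm S).det := (Matrix.isUnit_iff_isUnit_det _).mp h
  have h1 : tm S * (tm S)⁻¹ = 1 := Matrix.mul_nonsing_inv _ hd
  have h2 := sig_mul (tm S) ((tm S)⁻¹)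
  rw [h1, sig_one, sig_tm] at h2
  have hs : sig ((tm S)⁻¹) = (tm S)⁻¹ := (Matrix.inv_eq_right_inv h2.symm).symm
  have : S.inv = Bimatrix.mk ((tm S)⁻¹).toBlocks₁₁ ((tm S)⁻¹).toBlocks₂₁ := rfl
  rw [this, tm_of_sig_fixed hs]

lemma isInv_of_isUnit {S : Bimatrix k k} (h : IsUnit (tm S)) : S.IsInv S.inv := by
  have hd : IsUnit (tm S).det := (Matrix.isUnit_iff_isUnit_det _).mp h
  constructor
  · apply tm_inj; rw [tm_mul, tm_inv h, tm_one, Matrix.mul_nonsing_inv _ hd]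
  · apply tm_inj; rw [tm_mul, tm_inv h, tm_one, Matrix.nonsing_inv_mul _ hd]

end Bimatrix
end Aux2

section Aux3
namespace Bimatrix
variable {k l : ℕ}

lemma star_mulVec' {k l : ℕ} (M : Matrix (Fin k) (Fin l) ℂ) (v : Fin l → ℂ) :
    star (M *ᵥ v) = mconj M *ᵥ star v := by
  ext i
  simp only [Pi.star_apply, Matrix.mulVec, dotProduct, mconj, Matrix.map_apply]
  rw [star_sum]
  congr 1
  funext j
  rw [star_mul']
  rfl

lemma star_dotProduct' {k : ℕ} (u v : Fin k ⊕ Fin k → ℂ) :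
    star (u ⬝ᵥ v) = star u ⬝ᵥ star v := by
  simp only [dotProduct, Pi.star_apply]
  rw [star_sum]
  simp [mul_comm]

lemma star_dotProduct'' {k : ℕ} (u v : Fin k → ℂ) :
    star (u ⬝ᵥ v) = star u ⬝ᵥ star v := by
  simp only [dotProduct, Pi.star_apply]
  rw [star_sum]
  simp [mul_comm]

lemma star_sum_elim {α : Type*} [Star α] {a b : ℕ} (u : Fin a → α) (v : Fin b → α) :
    star (Sum.elim u v) = Sum.elim (star u) (star v) := by
  ext i; cases i <;> rfl

/-- The key quadratic-form identity relating `tm P` and `quadForm`. -/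
lemma quad_key (P : Bimatrix k k) (x : Fin k → ℂ) :
    star (Sum.elim x (star x)) ⬝ᵥ (tm P *ᵥ Sum.elim x (star x)) =
      (star x ⬝ᵥ P.apply x) + star (star x ⬝ᵥ P.apply x) := by
  have hmv : tm P *ᵥ Sum.elim x (star x) =
      Sum.elim (P.fst *ᵥ x + mconj P.snd *ᵥ star x) (P.snd *ᵥ x + mconj P.fst *ᵥ star x) := by
    rw [tm, Matrix.fromBlocks_mulVec]
    congr 1 <;> simp
  rw [hmv, star_sum_elim, star_star, sumElim_dotProduct_sumElim]
  have hw : star (star x ⬝ᵥ P.apply x) = x ⬝ᵥ (P.snd *ᵥ x + mconj P.fst *ᵥ star x) := by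
    rw [Bimatrix.apply, star_dotProduct'', star_star, star_add, star_mulVec', star_mulVec',
      mconj_mconj, star_star]
    rw [add_comm]
  rw [hw, Bimatrix.apply]

lemma posDef_of_tm {P : Bimatrix k k} (h : (tm P).PosDef) : P.PosDef := by
  have hherm : P.IsHermitian := by
    have h1 : tm P.conjT = tm P := by rw [tm_conjT]; exact h.isHermitian
    have h2 : P.conjT = P := tm_inj h1
    cases' P with P1 P2
    exact ⟨congrArg Bimatrix.fst h2, congrArg Bimatrix.snd h2⟩
  have hre : ∀ x : Fin k → ℂ, P.quadForm x =
      (star (Sum.elim x (star x)) ⬝ᵥ (tm P *ᵥ Sum.elim x (star x))).re / 2 := by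
    intro x
    rw [quad_key, Bimatrix.quadForm]
    have : (star (star x ⬝ᵥ P.apply x)).re = (star x ⬝ᵥ P.apply x).re := by
      rw [Complex.star_def, Complex.conj_re]
    rw [Complex.add_re, this]
    ring
  refine ⟨hherm, fun x => ?_, fun x hx => ?_⟩
  · rcases eq_or_ne x 0 with rfl | hx
    · rcases eq_or_ne (Sum.elim (0 : Fin k → ℂ) (star (0 : Fin k → ℂ))) 0 with h0 | h0
      · rw [hre, h0]; simp
      · have := h.dotProduct_mulVec_pos h0
        rw [hre]
        have hle := le_of_lt this
        rw [Complex.le_def] at hle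
        simp only [Complex.zero_re] at hle
        linarith [hle.1]
    · have hv : Sum.elim x (star x) ≠ 0 := by
        intro hc
        apply hx
        funext i
        have := congrFun hc (Sum.inl i)
        simpa using this
      have := h.dotProduct_mulVec_pos hv
      rw [Complex.lt_def] at this
      simp only [Complex.zero_re] at this
      rw [hre]
      linarith [this.1]
  · have hv : Sum.elim x (star x) ≠ 0 := by
      intro hc
      apply hx
      funext i
      have := congrFun hc (Sum.inl i)
      simpa using this
    have := h.dotProduct_mulVec_pos hv
    rw [Complex.lt_def] at this
    simp only [Complex.zero_re] at this
    rw [hre]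
    linarith [this.1]

/-- Positive definiteness of a block-diagonal matrix. -/
lemma posDef_blockDiag {D E : Matrix (Fin k) (Fin k) ℂ} (hD : D.PosDef) (hE : E.PosDef) :
    (fromBlocks D 0 0 E).PosDef := by
  refine Matrix.PosDef.of_dotProduct_mulVec_pos ?_ ?_
  · show (fromBlocks D 0 0 E)ᴴ = fromBlocks D 0 0 E
    rw [Matrix.fromBlocks_conjTranspose]
    simp only [Matrix.conjTranspose_zero]
    rw [hD.isHermitian, hE.isHermitian]
  · intro v hv
    have hval : star v ⬝ᵥ (fromBlocks D 0 0 E *ᵥ v) =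
        star (v ∘ Sum.inl) ⬝ᵥ (D *ᵥ (v ∘ Sum.inl)) +
        star (v ∘ Sum.inr) ⬝ᵥ (E *ᵥ (v ∘ Sum.inr)) := by
      rw [Matrix.fromBlocks_mulVec]
      have hsv : star v = Sum.elim (star (v ∘ Sum.inl)) (star (v ∘ Sum.inr)) := by
        ext i; cases i <;> rfl
      rw [hsv, sumElim_dotProduct_sumElim]
      simp
    rw [hval]
    rcases eq_or_ne (v ∘ Sum.inl) 0 with h1 | h1
    · have h2 : v ∘ Sum.inr ≠ 0 := by
        intro h2
        apply hv
        funext i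
        cases i with
        | inl i => exact congrFun h1 i
        | inr i => exact congrFun h2 i
      rw [h1]
      simpa using add_pos_of_nonneg_of_pos (hD.posSemidef.dotProduct_mulVec_nonneg 0) (hE.dotProduct_mulVec_pos h2)
    · exact add_pos_of_pos_of_nonneg (hD.dotProduct_mulVec_pos h1) (hE.posSemidef.dotProduct_mulVec_nonneg _)

lemma mconj_posDef {Q : Matrix (Fin k) (Fin k) ℂ} (hQ : Q.PosDef) : (mconj Q).PosDef := by
  have h1 : mconj Q = Qᵀ := by
    have h2 : Qᴴ = Q := hQ.isHermitian
    calc mconj Q = Qᴴᵀ := by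
          ext i j; simp [mconj, Matrix.conjTranspose_apply, Complex.star_def]
    _ = Qᵀ := by rw [h2]
  rw [h1]
  exact hQ.transpose

lemma tm_mk_posDef {Q : Matrix (Fin k) (Fin k) ℂ} (hQ : Q.PosDef) :
    (tm (Bimatrix.mk Q 0)).PosDef := by
  have : tm (Bimatrix.mk Q 0) = fromBlocks Q 0 0 (mconj Q) := by
    rw [tm]; simp [mconj_zero]
  rw [this]
  exact posDef_blockDiag hQ (mconj_posDef hQ)

end Bimatrix
end Aux3

section Aux4
open Bimatrix

variable {n m : ℕ}

/-- The core step lemma: everything we need about one Riccati step. -/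
lemma riccati_step
    (A : Bimatrix n n) (B : Bimatrix n m)
    (Q : Matrix (Fin n) (Fin n) ℂ) (R : Matrix (Fin m) (Fin m) ℂ)
    (hQ : Q.PosDef) (hR : R.PosDef)
    (Rb : Bimatrix n n) (hRb : Rb = B.mul ((Bimatrix.mk R⁻¹ 0).mul B.conjT))
    (P : Bimatrix n n) (hP : (tm P).PosDef) :
    (P.PosDef ∧ P.IsInv P.inv) ∧
    ((P.inv.add Rb).PosDef ∧ (P.inv.add Rb).IsInv (P.inv.add Rb).inv) ∧
    (((Bimatrix.mk Q 0).add (A.conjT.mul (P.mul A))).sub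
        (A.conjT.mul (P.mul (B.mul ((Smat B R P).inv.mul (B.conjT.mul (P.mul A)))))) =
      (Bimatrix.mk Q 0).add (A.conjT.mul (((P.inv.add Rb).inv).mul A))) ∧
    (tm ((Bimatrix.mk Q 0).add (A.conjT.mul (((P.inv.add Rb).inv).mul A)))).PosDef := by
  set A' := tm A with hA'
  set B' := tm B with hB'
  set M := tm P with hM
  have hQ' : (tm (Bimatrix.mk Q 0)).PosDef := tm_mk_posDef hQ
  have hR' : (tm (Bimatrix.mk R 0)).PosDef := tm_mk_posDef hR
  have hPu : IsUnit M := hP.isUnit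
  have hPdet : IsUnit M.det := (Matrix.isUnit_iff_isUnit_det _).mp hPu
  have hRdet : IsUnit R.det := (Matrix.isUnit_iff_isUnit_det _).mp hR.isUnit
  have hR'det : IsUnit (tm (Bimatrix.mk R 0)).det :=
    (Matrix.isUnit_iff_isUnit_det _).mp hR'.isUnit
  -- inverse of the block `R`
  have hmulR : (Bimatrix.mk R 0).mul (Bimatrix.mk R⁻¹ 0) = Bimatrix.one m := by
    refine bext ?_ ?_ <;>
      simp [Bimatrix.mul, Bimatrix.one, mconj_zero, Matrix.mul_nonsing_inv _ hRdet]
  have hRinv : (tm (Bimatrix.mk R 0))⁻¹ = tm (Bimatrix.mk R⁻¹ 0) :=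
    Matrix.inv_eq_right_inv (by rw [← tm_mul, hmulR, tm_one])
  -- `tm Rb`
  have htmRb : tm Rb = B' * ((tm (Bimatrix.mk R 0))⁻¹ * B'ᴴ) := by
    rw [hRb, tm_mul, tm_mul, tm_conjT, hRinv]
  have hRbps : (tm Rb).PosSemidef := by
    rw [htmRb, ← Matrix.mul_assoc]
    exact (hR'.inv).posSemidef.mul_mul_conjTranspose_same B'
  -- `N = M⁻¹ + tm Rb`
  have hN : tm (P.inv.add Rb) = M⁻¹ + tm Rb := by rw [tm_add, tm_inv hPu]
  have hNpos : (M⁻¹ + tm Rb).PosDef := hP.inv.add_posSemidef hRbps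
  have hNpos' : (tm (P.inv.add Rb)).PosDef := by rw [hN]; exact hNpos
  have hNu : IsUnit (tm (P.inv.add Rb)) := hNpos'.isUnit
  -- `S' = tm (Smat B R P)`
  have hS' : tm (Smat B R P) = tm (Bimatrix.mk R 0) + B'ᴴ * (M * B') := by
    rw [Smat, tm_add, tm_mul, tm_mul, tm_conjT]
  have hS'pos : (tm (Smat B R P)).PosDef := by
    rw [hS', ← Matrix.mul_assoc]
    exact hR'.add_posSemidef (hP.posSemidef.conjTranspose_mul_mul_same B')
  have hS'u : IsUnit (tm (Smat B R P)) := hS'pos.isUnit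
  -- Woodbury
  have hACu : IsUnit ((tm (Bimatrix.mk R 0))⁻¹⁻¹ + B'ᴴ * M⁻¹⁻¹ * B') := by
    rw [Matrix.nonsing_inv_nonsing_inv _ hPdet, Matrix.nonsing_inv_nonsing_inv _ hR'det]
    have : (tm (Bimatrix.mk R 0)) + B'ᴴ * M * B' = tm (Smat B R P) := by
      rw [hS', Matrix.mul_assoc]
    rw [this]
    exact hS'u
  have hw := Matrix.add_mul_mul_inv_eq_sub (M⁻¹) B' ((tm (Bimatrix.mk R 0))⁻¹) B'ᴴ
    (hP.inv).isUnit (hR'.inv).isUnit hACu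
  rw [Matrix.nonsing_inv_nonsing_inv _ hPdet, Matrix.nonsing_inv_nonsing_inv _ hR'det] at hw
  -- the rewritten iteration at the matrix level
  have heq : tm (((Bimatrix.mk Q 0).add (A.conjT.mul (P.mul A))).sub
        (A.conjT.mul (P.mul (B.mul ((Smat B R P).inv.mul (B.conjT.mul (P.mul A))))))) =
      tm ((Bimatrix.mk Q 0).add (A.conjT.mul (((P.inv.add Rb).inv).mul A))) := by
    simp only [tm_sub, tm_add, tm_mul, tm_conjT]
    rw [tm_inv hS'u, tm_inv hNu, hN, htmRb, hS']
    rw [show M⁻¹ + B' * ((tm (Bimatrix.mk R 0))⁻¹ * B'ᴴ)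
        = M⁻¹ + B' * (tm (Bimatrix.mk R 0))⁻¹ * B'ᴴ by rw [Matrix.mul_assoc]]
    rw [hw]
    simp only [Matrix.mul_assoc, Matrix.mul_sub, Matrix.sub_mul, Matrix.add_mul,
      Matrix.mul_add]
    abel
  have hfinal : (tm ((Bimatrix.mk Q 0).add (A.conjT.mul (((P.inv.add Rb).inv).mul A)))).PosDef := by
    simp only [tm_add, tm_mul, tm_conjT]
    rw [tm_inv hNu, hN]
    rw [← Matrix.mul_assoc]
    exact hQ'.add_posSemidef ((hNpos.inv).posSemidef.conjTranspose_mul_mul_same A')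
  exact ⟨⟨posDef_of_tm hP, isInv_of_isUnit hPu⟩,
    ⟨posDef_of_tm hNpos', isInv_of_isUnit hNu⟩, tm_inj heq, hfinal⟩

end Aux4

/-- With `{R₁,R₂} = {B₁,B₂}{R⁻¹,0}{B₁,B₂}^H`, every iterate of the
Riccati iteration started at `{Q,0}` is a positive definite (hence invertible) bimatrix,
`{P(k)}⁻¹ + {R₁,R₂}` is positive definite (hence invertible), and the iteration can be
rewritten as `{P(k+1)} = {Q,0} + {A}^H ({P(k)}⁻¹ + {R₁,R₂})⁻¹ {A}`. -/
theorem riccatiIter_inverse_form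
    (A : Bimatrix n n) (B : Bimatrix n m)
    (Q : Matrix (Fin n) (Fin n) ℂ) (R : Matrix (Fin m) (Fin m) ℂ)
    (hQ : Q.PosDef) (hR : R.PosDef)
    (Rb : Bimatrix n n) (hRb : Rb = B.mul ((Bimatrix.mk R⁻¹ 0).mul B.conjT)) :
    ∀ k : ℕ,
      ((riccatiIter A B Q R k).PosDef ∧
        (riccatiIter A B Q R k).IsInv (riccatiIter A B Q R k).inv) ∧
      (((riccatiIter A B Q R k).inv.add Rb).PosDef ∧
        ((riccatiIter A B Q R k).inv.add Rb).IsInv ((riccatiIter A B Q R k).inv.add Rb).inv) ∧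
      riccatiIter A B Q R (k + 1) =
        (Bimatrix.mk Q 0).add
          (A.conjT.mul ((((riccatiIter A B Q R k).inv.add Rb).inv).mul A)) := by
  intro k
  have hiter : ∀ j : ℕ, riccatiIter A B Q R (j + 1) =
      ((Bimatrix.mk Q 0).add (A.conjT.mul ((riccatiIter A B Q R j).mul A))).sub
        (A.conjT.mul ((riccatiIter A B Q R j).mul (B.mul
          ((Smat B R (riccatiIter A B Q R j)).inv.mul
            (B.conjT.mul ((riccatiIter A B Q R j).mul A)))))) := fun j => rfl
  have main : ∀ j : ℕ, (Bimatrix.tm (riccatiIter A B Q R j)).PosDef := by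
    intro j
    induction j with
    | zero => exact Bimatrix.tm_mk_posDef hQ
    | succ j ih =>
      have h := riccati_step A B Q R hQ hR Rb hRb _ ih
      rw [hiter j, h.2.2.1]
      exact h.2.2.2
  have h := riccati_step A B Q R hQ hR Rb hRb _ (main k)
  exact ⟨h.1, h.2.1, by rw [hiter k]; exact h.2.2.1⟩
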